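/- Let α ∈ (0, 1/2) and define the mean-absolute-difference total egalitarian value V_α(X) = Tot(X) − α·MAD(X)·|X|. Let Z₀ be a fixed population, and define the weighting function f(w) = w − 2α·MAD(w, Z₀) + α·MAD(Z₀), where MAD(w, Z₀) = Σ_x (Z₀(x)/|Z₀|)·|x − w|. Then for all populations X and Y with Σ_w X(w)·f(w) > Σ_w Y(w)·f(w), there exists N ∈ ℕ such that V_α(X + n·Z₀) > V_α(Y + n·Z₀) for every integer n ≥ N. -/

import Mathlib

/-- The size of a population: total number of welfare subjects. -/
noncomputable def psize (X : ℝ →₀ ℕ) : ℕ := X.sum fun _ n => n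

/-- Total welfare of a population. -/
noncomputable def ptot (X : ℝ →₀ ℕ) : ℝ := X.sum fun w n => (n : ℝ) * w

/-- Average welfare of a population. -/
noncomputable def pavg (X : ℝ →₀ ℕ) : ℝ := ptot X / (psize X : ℝ)

/-- Critical-level utilitarian value with critical level `c`. -/
noncomputable def vcl (c : ℝ) (X : ℝ →₀ ℕ) : ℝ := ptot X - c * (psize X : ℝ)

/-- Mean absolute difference of welfare in a population. -/
noncomputable def mad (X : ℝ →₀ ℕ) : ℝ :=
  (X.sum fun v m => X.sum fun w n => (m : ℝ) * (n : ℝ) * |v - w|) / ((psize X : ℝ) ^ 2)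

/-- Average distance between a welfare level `w` and the welfare levels in `Z`. -/
noncomputable def madTo (w : ℝ) (Z : ℝ →₀ ℕ) : ℝ :=
  Z.sum fun x n => ((n : ℝ) / (psize Z : ℝ)) * |x - w|

open Filter Finset Topology

lemma psize_sum {P : ℝ →₀ ℕ} {u : Finset ℝ} (h : P.support ⊆ u) :
    (psize P : ℝ) = ∑ w ∈ u, (P w : ℝ) := by
  rw [psize, Finsupp.sum_of_support_subset P h _ (fun i _ => rfl)]
  push_cast
  rfl

lemma ptot_sum {P : ℝ →₀ ℕ} {u : Finset ℝ} (h : P.support ⊆ u) :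
    ptot P = ∑ w ∈ u, (P w : ℝ) * w := by
  rw [ptot]
  exact Finsupp.sum_of_support_subset P h _ (fun i _ => by simp)

lemma dsum_sum {P : ℝ →₀ ℕ} {u : Finset ℝ} (h : P.support ⊆ u) :
    (P.sum fun v m => P.sum fun w n => (m : ℝ) * (n : ℝ) * |v - w|)
      = ∑ v ∈ u, ∑ w ∈ u, (P v : ℝ) * (P w : ℝ) * |v - w| := by
  rw [Finsupp.sum_of_support_subset P h _ (fun i _ => by simp [Finsupp.sum])]
  exact Finset.sum_congr rfl fun v _ =>
    Finsupp.sum_of_support_subset P h _ (fun i _ => by simp)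

lemma madTo_sum {Z : ℝ →₀ ℕ} {u : Finset ℝ} (h : Z.support ⊆ u) (w : ℝ) :
    madTo w Z = ∑ x ∈ u, ((Z x : ℝ) / (psize Z : ℝ)) * |x - w| := by
  rw [madTo]
  exact Finsupp.sum_of_support_subset Z h _ (fun i _ => by simp)

lemma psize_pos {P : ℝ →₀ ℕ} (h : P ≠ 0) : 0 < psize P := by
  obtain ⟨a, ha⟩ := Finsupp.ne_iff.mp h
  have ha' : P a ≠ 0 := by simpa using ha
  have hmem : a ∈ P.support := Finsupp.mem_support_iff.mpr ha'
  exact Finset.sum_pos' (fun i _ => Nat.zero_le _) ⟨a, hmem, Nat.pos_of_ne_zero ha'⟩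

lemma value_formula (α : ℝ) (V : (ℝ →₀ ℕ) → ℝ)
    (hV : ∀ X : ℝ →₀ ℕ, V X = ptot X - α * mad X * (psize X : ℝ))
    (Z₀ P : ℝ →₀ ℕ) (u : Finset ℝ) (hZu : Z₀.support ⊆ u) (hPu : P.support ⊆ u)
    (hP : 0 < (psize P : ℝ)) (n : ℕ) :
    V (P + n • Z₀) = ((∑ w ∈ u, (P w : ℝ) * w) + n * (∑ w ∈ u, (Z₀ w : ℝ) * w))
      - α * (((∑ v ∈ u, ∑ w ∈ u, (P v : ℝ) * (P w : ℝ) * |v - w|)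
           + 2 * n * (∑ v ∈ u, ∑ w ∈ u, (P v : ℝ) * (Z₀ w : ℝ) * |v - w|)
           + n ^ 2 * (∑ v ∈ u, ∑ w ∈ u, (Z₀ v : ℝ) * (Z₀ w : ℝ) * |v - w|))
        / ((∑ w ∈ u, (P w : ℝ)) + n * (psize Z₀ : ℝ))) := by
  have hQu : (P + n • Z₀).support ⊆ u :=
    Finsupp.support_add.trans (Finset.union_subset hPu (Finsupp.support_smul.trans hZu))
  have hQval : ∀ w : ℝ, ((P + n • Z₀) w : ℝ) = (P w : ℝ) + n * (Z₀ w : ℝ) := by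
    intro w
    have : (P + n • Z₀) w = P w + n * Z₀ w := by
      simp [Finsupp.add_apply, Finsupp.smul_apply, smul_eq_mul]
    rw [this]; push_cast; ring
  have hpP : (psize P : ℝ) = ∑ w ∈ u, (P w : ℝ) := psize_sum hPu
  have hpZ : (psize Z₀ : ℝ) = ∑ w ∈ u, (Z₀ w : ℝ) := psize_sum hZu
  -- size of the combined population
  have hsq : (psize (P + n • Z₀) : ℝ) = (∑ w ∈ u, (P w : ℝ)) + n * (psize Z₀ : ℝ) := by
    rw [psize_sum hQu, hpZ, Finset.mul_sum, ← Finset.sum_add_distrib]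
    exact Finset.sum_congr rfl fun w _ => hQval w
  -- total of the combined population
  have htq : ptot (P + n • Z₀) = (∑ w ∈ u, (P w : ℝ) * w) + n * (∑ w ∈ u, (Z₀ w : ℝ) * w) := by
    rw [ptot_sum hQu, Finset.mul_sum, ← Finset.sum_add_distrib]
    refine Finset.sum_congr rfl fun w _ => ?_
    rw [hQval w]; ring
  -- the double sum of the combined population
  have hswap : (∑ v ∈ u, ∑ w ∈ u, (Z₀ v : ℝ) * (P w : ℝ) * |v - w|)
      = ∑ v ∈ u, ∑ w ∈ u, (P v : ℝ) * (Z₀ w : ℝ) * |v - w| := by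
    rw [Finset.sum_comm]
    exact Finset.sum_congr rfl fun v _ => Finset.sum_congr rfl fun w _ => by
      rw [abs_sub_comm]; ring
  have hSq : (((P + n • Z₀)).sum fun v m => ((P + n • Z₀)).sum fun w k => (m : ℝ) * (k : ℝ) * |v - w|)
      = (∑ v ∈ u, ∑ w ∈ u, (P v : ℝ) * (P w : ℝ) * |v - w|)
        + 2 * n * (∑ v ∈ u, ∑ w ∈ u, (P v : ℝ) * (Z₀ w : ℝ) * |v - w|)
        + n ^ 2 * (∑ v ∈ u, ∑ w ∈ u, (Z₀ v : ℝ) * (Z₀ w : ℝ) * |v - w|) := by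
    rw [dsum_sum hQu]
    have step : ∀ v ∈ u, ∀ w ∈ u,
        ((P + n • Z₀) v : ℝ) * ((P + n • Z₀) w : ℝ) * |v - w|
          = (P v : ℝ) * (P w : ℝ) * |v - w|
            + n * ((P v : ℝ) * (Z₀ w : ℝ) * |v - w|)
            + n * ((Z₀ v : ℝ) * (P w : ℝ) * |v - w|)
            + n ^ 2 * ((Z₀ v : ℝ) * (Z₀ w : ℝ) * |v - w|) := by
      intro v _ w _
      rw [hQval v, hQval w]; ring
    calc (∑ v ∈ u, ∑ w ∈ u, ((P + n • Z₀) v : ℝ) * ((P + n • Z₀) w : ℝ) * |v - w|)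
        = ∑ v ∈ u, ∑ w ∈ u, ((P v : ℝ) * (P w : ℝ) * |v - w|
            + n * ((P v : ℝ) * (Z₀ w : ℝ) * |v - w|)
            + n * ((Z₀ v : ℝ) * (P w : ℝ) * |v - w|)
            + n ^ 2 * ((Z₀ v : ℝ) * (Z₀ w : ℝ) * |v - w|)) := by
          exact Finset.sum_congr rfl fun v hv => Finset.sum_congr rfl fun w hw => step v hv w hw
      _ = (∑ v ∈ u, ∑ w ∈ u, (P v : ℝ) * (P w : ℝ) * |v - w|)
            + n * (∑ v ∈ u, ∑ w ∈ u, (P v : ℝ) * (Z₀ w : ℝ) * |v - w|)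
            + n * (∑ v ∈ u, ∑ w ∈ u, (Z₀ v : ℝ) * (P w : ℝ) * |v - w|)
            + n ^ 2 * (∑ v ∈ u, ∑ w ∈ u, (Z₀ v : ℝ) * (Z₀ w : ℝ) * |v - w|) := by
          simp [Finset.sum_add_distrib, Finset.mul_sum]
      _ = _ := by rw [hswap]; ring
  have hden : (0 : ℝ) < (∑ w ∈ u, (P w : ℝ)) + n * (psize Z₀ : ℝ) := by
    have h1 : (0:ℝ) < ∑ w ∈ u, (P w : ℝ) := hpP ▸ hP
    have h2 : (0:ℝ) ≤ n * (psize Z₀ : ℝ) := by positivity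
    linarith
  rw [hV, mad, hSq, htq, hsq]
  field_simp

lemma lim_aux (A B C a b z : ℝ) (hz : 0 < z) (ha : 0 < a) (hb : 0 < b) :
    Tendsto (fun n : ℕ => (A * n ^ 2 + B * n + C) / ((a + n * z) * (b + n * z)))
      atTop (𝓝 (A / (z * z))) := by
  have h1 : Tendsto (fun n : ℕ => ((n : ℝ))⁻¹) atTop (𝓝 0) :=
    tendsto_inv_atTop_nhds_zero_nat
  have hnum : Tendsto (fun n : ℕ => A + B * ((n : ℝ))⁻¹ + C * ((n : ℝ))⁻¹ ^ 2)
      atTop (𝓝 A) := by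
    have := ((tendsto_const_nhds (x := A) (f := atTop (α := ℕ))).add (h1.const_mul B)).add ((h1.pow 2).const_mul C)
    simpa using this
  have hden : Tendsto (fun n : ℕ => (a * ((n : ℝ))⁻¹ + z) * (b * ((n : ℝ))⁻¹ + z))
      atTop (𝓝 (z * z)) := by
    have := ((h1.const_mul a).add (tendsto_const_nhds (x := z))).mul
      ((h1.const_mul b).add (tendsto_const_nhds (x := z)))
    simpa using this
  have hzz : (z : ℝ) * z ≠ 0 := by positivity
  have hdiv := hnum.div hden hzz
  refine hdiv.congr' ?_
  filter_upwards [eventually_ge_atTop 1] with n hn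
  have hn0 : ((n : ℝ)) ≠ 0 := by
    have : (1:ℝ) ≤ (n:ℝ) := by exact_mod_cast hn
    linarith
  rw [Pi.div_apply]
  field_simp

theorem stmt_10 (α : ℝ) (hα0 : 0 < α) (hα1 : α < 1 / 2)
    (V : (ℝ →₀ ℕ) → ℝ)
    (hV : ∀ X : ℝ →₀ ℕ, V X = ptot X - α * mad X * (psize X : ℝ))
    (Z₀ : ℝ →₀ ℕ) (hZ₀ : Z₀ ≠ 0)
    (f : ℝ → ℝ)
    (hf : ∀ w : ℝ, f w = w - 2 * α * madTo w Z₀ + α * mad Z₀)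
    (X Y : ℝ →₀ ℕ) (hX : X ≠ 0) (hY : Y ≠ 0)
    (hfsum : X.sum (fun w n => (n : ℝ) * f w) > Y.sum (fun w n => (n : ℝ) * f w)) :
    ∃ N : ℕ, ∀ n : ℕ, n ≥ N → V (X + n • Z₀) > V (Y + n • Z₀) := by
  classical
  set u : Finset ℝ := (X.support ∪ Y.support) ∪ Z₀.support with hu
  have hXu : X.support ⊆ u := Finset.subset_union_left.trans Finset.subset_union_left
  have hYu : Y.support ⊆ u := Finset.subset_union_right.trans Finset.subset_union_left
  have hZu : Z₀.support ⊆ u := Finset.subset_union_right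
  have hzpos : (0:ℝ) < (psize Z₀ : ℝ) := by exact_mod_cast psize_pos hZ₀
  have hppos : (0:ℝ) < (psize X : ℝ) := by exact_mod_cast psize_pos hX
  have hqpos : (0:ℝ) < (psize Y : ℝ) := by exact_mod_cast psize_pos hY
  set z : ℝ := (psize Z₀ : ℝ) with hz
  set p : ℝ := ∑ w ∈ u, (X w : ℝ) with hp
  set q : ℝ := ∑ w ∈ u, (Y w : ℝ) with hq
  have hp' : p = (psize X : ℝ) := (psize_sum hXu).symm
  have hq' : q = (psize Y : ℝ) := (psize_sum hYu).symm
  have hppos' : 0 < p := hp' ▸ hppos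
  have hqpos' : 0 < q := hq' ▸ hqpos
  set tX : ℝ := ∑ w ∈ u, (X w : ℝ) * w with htX
  set tY : ℝ := ∑ w ∈ u, (Y w : ℝ) * w with htY
  set tZ : ℝ := ∑ w ∈ u, (Z₀ w : ℝ) * w with htZ
  set SX : ℝ := ∑ v ∈ u, ∑ w ∈ u, (X v : ℝ) * (X w : ℝ) * |v - w| with hSX
  set SY : ℝ := ∑ v ∈ u, ∑ w ∈ u, (Y v : ℝ) * (Y w : ℝ) * |v - w| with hSY
  set SZ : ℝ := ∑ v ∈ u, ∑ w ∈ u, (Z₀ v : ℝ) * (Z₀ w : ℝ) * |v - w| with hSZ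
  set TX : ℝ := ∑ v ∈ u, ∑ w ∈ u, (X v : ℝ) * (Z₀ w : ℝ) * |v - w| with hTX
  set TY : ℝ := ∑ v ∈ u, ∑ w ∈ u, (Y v : ℝ) * (Z₀ w : ℝ) * |v - w| with hTY
  -- value formulas
  have hVX := value_formula α V hV Z₀ X u hZu hXu hppos
  have hVY := value_formula α V hV Z₀ Y u hZu hYu hqpos
  -- combine fractions
  set A : ℝ := 2 * TX * z + SZ * q - (2 * TY * z + SZ * p) with hA
  set B : ℝ := SX * z + 2 * TX * q - (SY * z + 2 * TY * p) with hB
  set C : ℝ := SX * q - SY * p with hC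
  have hdenX : ∀ n : ℕ, (0:ℝ) < p + n * z := by
    intro n
    have : (0:ℝ) ≤ n * z := by positivity
    linarith
  have hdenY : ∀ n : ℕ, (0:ℝ) < q + n * z := by
    intro n
    have : (0:ℝ) ≤ n * z := by positivity
    linarith
  have hdiff : ∀ n : ℕ, V (X + n • Z₀) - V (Y + n • Z₀)
      = (tX - tY) - α * ((A * n ^ 2 + B * n + C) / ((p + n * z) * (q + n * z))) := by
    intro n
    have hcomb : (SX + 2 * n * TX + n ^ 2 * SZ) / (p + n * z)
        - (SY + 2 * n * TY + n ^ 2 * SZ) / (q + n * z)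
        = (A * n ^ 2 + B * n + C) / ((p + n * z) * (q + n * z)) := by
      rw [div_sub_div _ _ (hdenX n).ne' (hdenY n).ne']
      congr 1
      rw [hA, hB, hC]; ring
    rw [hVX n, hVY n, ← hcomb]
    ring
  -- limit
  have hlim1 := lim_aux A B C p q z hzpos hppos' hqpos'
  have hlim2 : Tendsto (fun n : ℕ => V (X + n • Z₀) - V (Y + n • Z₀)) atTop
      (𝓝 ((tX - tY) - α * (A / (z * z)))) := by
    have h := tendsto_const_nhds (x := tX - tY) (f := atTop (α := ℕ)) |>.sub (hlim1.const_mul α)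
    exact h.congr fun n => (hdiff n).symm
  -- identify the limit with the f-sum difference
  have hmadZ : mad Z₀ = SZ / z ^ 2 := by
    rw [mad, dsum_sum hZu]
  have hXmadTo : ∑ w ∈ u, (X w : ℝ) * madTo w Z₀ = TX / z := by
    rw [eq_div_iff hzpos.ne', Finset.sum_mul, hTX]
    refine Finset.sum_congr rfl fun w _ => ?_
    rw [madTo_sum hZu w, Finset.mul_sum, Finset.sum_mul]
    refine Finset.sum_congr rfl fun x _ => ?_
    rw [abs_sub_comm, ← hz]
    field_simp
  have hYmadTo : ∑ w ∈ u, (Y w : ℝ) * madTo w Z₀ = TY / z := by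
    rw [eq_div_iff hzpos.ne', Finset.sum_mul, hTY]
    refine Finset.sum_congr rfl fun w _ => ?_
    rw [madTo_sum hZu w, Finset.mul_sum, Finset.sum_mul]
    refine Finset.sum_congr rfl fun x _ => ?_
    rw [abs_sub_comm, ← hz]
    field_simp
  have e1 : ∀ (P : ℝ →₀ ℕ) (TP : ℝ), (∑ w ∈ u, (P w : ℝ) * madTo w Z₀ = TP / z) →
      ∑ w ∈ u, (P w : ℝ) * f w
        = (∑ w ∈ u, (P w : ℝ) * w) - 2 * α * (TP / z)
          + α * (SZ / z ^ 2) * (∑ w ∈ u, (P w : ℝ)) := by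
    intro P TP hTP
    have hterm : ∀ w ∈ u, (P w : ℝ) * f w
        = (P w : ℝ) * w - 2 * α * ((P w : ℝ) * madTo w Z₀) + α * (SZ / z ^ 2) * (P w : ℝ) := by
      intro w _
      rw [hf w, hmadZ]; ring
    rw [Finset.sum_congr rfl hterm, Finset.sum_add_distrib, Finset.sum_sub_distrib,
      ← Finset.mul_sum, hTP, ← Finset.mul_sum]
  have hfX : X.sum (fun w n => (n : ℝ) * f w) = ∑ w ∈ u, (X w : ℝ) * f w :=
    Finsupp.sum_of_support_subset X hXu _ (fun i _ => by simp)
  have hfY : Y.sum (fun w n => (n : ℝ) * f w) = ∑ w ∈ u, (Y w : ℝ) * f w :=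
    Finsupp.sum_of_support_subset Y hYu _ (fun i _ => by simp)
  have hLpos : 0 < (tX - tY) - α * (A / (z * z)) := by
    have hineq : ∑ w ∈ u, (Y w : ℝ) * f w < ∑ w ∈ u, (X w : ℝ) * f w := by
      rw [← hfX, ← hfY]; exact hfsum
    have hLval : (tX - tY) - α * (A / (z * z))
        = (∑ w ∈ u, (X w : ℝ) * f w) - (∑ w ∈ u, (Y w : ℝ) * f w) := by
      rw [e1 X TX hXmadTo, e1 Y TY hYmadTo, hA]
      field_simp
      ring
    rw [hLval]
    linarith
  have hev : ∀ᶠ n : ℕ in atTop, 0 < V (X + n • Z₀) - V (Y + n • Z₀) :=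
    hlim2.eventually (eventually_gt_nhds hLpos)
  obtain ⟨N, hN⟩ := eventually_atTop.mp hev
  exact ⟨N, fun n hn => sub_pos.mp (hN n hn)⟩
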